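/- Let f be holomorphic on the open unit disk Δ and suppose F : ℝ≥0 × Δ → Δ satisfies the flow equation ∂F/∂t(t,z) + f(F(t,z)) = 0 and F(0,z) = z. Let h be holomorphic on Δ and λ ∈ ℂ satisfy λ·h(z) = h'(z)·f(z) on Δ. Then for every t ≥ 0 and z ∈ Δ, h(F(t,z)) = e^{-λ t}·h(z). -/

import Mathlib

open Complex Metric

theorem stmt11 (f : ℂ → ℂ) (hf : DifferentiableOn ℂ f (ball (0:ℂ) 1))
    (F : ℝ → ℂ → ℂ)
    (hmaps : ∀ t : ℝ, 0 ≤ t → ∀ z ∈ ball (0:ℂ) 1, F t z ∈ ball (0:ℂ) 1)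
    (hflow : ∀ t : ℝ, 0 ≤ t → ∀ z ∈ ball (0:ℂ) 1,
      HasDerivAt (fun s : ℝ => F s z) (-(f (F t z))) t)
    (hinit : ∀ z ∈ ball (0:ℂ) 1, F 0 z = z)
    (h : ℂ → ℂ) (hh : DifferentiableOn ℂ h (ball (0:ℂ) 1))
    (lam : ℂ) (heq : ∀ z ∈ ball (0:ℂ) 1, lam * h z = deriv h z * f z) :
    ∀ t : ℝ, 0 ≤ t → ∀ z ∈ ball (0:ℂ) 1,
      h (F t z) = Complex.exp (-lam * t) * h z := by
  intro t ht z hz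
  set φ : ℝ → ℂ := fun s => Complex.exp (lam * s) * h (F s z) with hφ
  -- derivative of φ is 0 at every s ≥ 0
  have hderiv : ∀ s : ℝ, 0 ≤ s → HasDerivAt φ 0 s := by
    intro s hs
    have hFs : F s z ∈ ball (0:ℂ) 1 := hmaps s hs z hz
    have hhd : HasDerivAt h (deriv h (F s z)) (F s z) :=
      ((hh.differentiableAt (isOpen_ball.mem_nhds hFs)).hasDerivAt)
    have hFd : HasDerivAt (fun u : ℝ => F u z) (-(f (F s z))) s := hflow s hs z hz
    -- chain rule over ℝ
    have hcomp : HasDerivAt (fun u : ℝ => h (F u z))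
        (-(f (F s z)) • deriv h (F s z)) s := by
      have := (hhd.hasFDerivAt.restrictScalars ℝ).comp_hasDerivAt s hFd.hasFDerivAt.hasDerivAt
      simpa [Function.comp_def] using this
    have hexp : HasDerivAt (fun u : ℝ => Complex.exp (lam * u))
        (Complex.exp (lam * s) * lam) s := by
      have h1 : HasDerivAt (fun u : ℝ => (u : ℂ)) 1 s := Complex.ofRealCLM.hasDerivAt
      have h2 : HasDerivAt (fun u : ℝ => lam * (u : ℂ)) (lam * 1) s := h1.const_mul lam
      simpa using h2.cexp
    have := hexp.mul hcomp
    have key : lam * h (F s z) = deriv h (F s z) * f (F s z) := heq _ hFs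
    have h0 : Complex.exp (lam * s) * lam * h (F s z)
        + Complex.exp (lam * s) * (-(f (F s z)) • deriv h (F s z)) = 0 := by
      simp only [smul_eq_mul]
      linear_combination Complex.exp (lam * s) * key
    rw [smul_eq_mul] at this h0
    simpa [hφ, h0] using h0 ▸ this
  -- φ is constant on [0, t]
  have hcont : ContinuousOn φ (Set.Icc 0 t) := fun s hs =>
    ((hderiv s hs.1).continuousAt).continuousWithinAt
  have hconst : φ t = φ 0 :=
    constant_of_has_deriv_right_zero hcont
      (fun s hs => ((hderiv s hs.1).hasDerivWithinAt)) t (Set.right_mem_Icc.2 ht)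
  have h0 : φ 0 = h z := by simp [hφ, hinit z hz]
  have : Complex.exp (lam * t) * h (F t z) = h z := by rw [← h0, ← hconst]
  have hne : Complex.exp (lam * t) ≠ 0 := Complex.exp_ne_zero _
  have := congrArg (fun w => Complex.exp (-(lam * t)) * w) this
  rw [← mul_assoc, ← Complex.exp_add, neg_add_cancel, Complex.exp_zero, one_mul] at this
  rw [this]
  ring_nf
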